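/- There are exactly 2^{n+1} anonymous, non-manipulable binary social choice functions on a society of n voters who choose between two alternatives a and b and are allowed to declare indifference. -/

import Mathlib

/-- Number of voters preferring alternative `a`. -/
def countA (n : ℕ) (P : Fin n → Option Bool) : ℕ :=
  (Finset.univ.filter fun v => P v = some true).card

/-- Number of voters preferring alternative `b`. -/
def countB (n : ℕ) (P : Fin n → Option Bool) : ℕ :=
  (Finset.univ.filter fun v => P v = some false).card

/-- The defining condition at quota `k`: at least `k` voters prefer `a`
or at least `n + 1 - k` voters prefer `b`. -/
def hits (n : ℕ) (P : Fin n → Option Bool) (k : ℕ) : Bool :=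
  decide (k ≤ countA n P ∨ n + 1 - k ≤ countB n P)

/-- The (generalized) extended quota majority method attached to a list of quotas:
find the least index whose quota condition holds, and output `true` (= a) iff the
a-branch of that condition holds. -/
def phi (n : ℕ) (l : List ℕ) (P : Fin n → Option Bool) : Bool :=
  decide (l.getD (l.findIdx (hits n P)) (n + 1) ≤ countA n P)

/-- A valid tuple for an extended quota majority method: nonempty, distinct entries
from `{0, …, n+1}`, last entry in `{0, n+1}`. -/
def Valid (n : ℕ) (l : List ℕ) : Prop :=
  l ≠ [] ∧ l.Nodup ∧ (∀ x ∈ l, x ≤ n + 1) ∧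
    (l.getLast? = some 0 ∨ l.getLast? = some (n + 1))

/-- Anonymity: the outcome is invariant under permutations of the voters. -/
def Anonymous (n : ℕ) (f : (Fin n → Option Bool) → Bool) : Prop :=
  ∀ (σ : Equiv.Perm (Fin n)) (P : Fin n → Option Bool), f (P ∘ σ) = f P

/-- Non-manipulability: a voter whose report is a strict preference for `x` and who,
by deviating, would obtain outcome `x`, already obtains outcome `x` truthfully. -/
def NonManipulable (n : ℕ) (f : (Fin n → Option Bool) → Bool) : Prop :=
  ∀ (v : Fin n) (P : Fin n → Option Bool) (q : Option Bool) (x : Bool),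
    P v = some x → f (Function.update P v q) = x → f P = x

namespace Stmt13

def stdP (n a b : ℕ) : Fin n → Option Bool := fun v =>
  if (v : ℕ) < a then some true else if (v : ℕ) < a + b then some false else none

lemma card_filter_val (n : ℕ) (p : ℕ → Prop) [DecidablePred p] :
    (Finset.univ.filter fun v : Fin n => p v.val).card
      = ((Finset.range n).filter p).card := by
  rw [← Nat.Iio_eq_range, ← Fin.map_valEmbedding_univ, Finset.filter_map, Finset.card_map]
  rfl

lemma countA_stdP {n a b : ℕ} (h : a + b ≤ n) : countA n (stdP n a b) = a := by
  have h1 : Finset.univ.filter (fun v : Fin n => stdP n a b v = some true)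
      = Finset.univ.filter (fun v : Fin n => v.val < a) := by
    apply Finset.filter_congr
    intro v _
    unfold stdP
    split_ifs <;> simp_all
  rw [countA, h1, card_filter_val n (fun x => x < a)]
  have h2 : (Finset.range n).filter (fun x => x < a) = Finset.range a := by
    ext x; simp; omega
  rw [h2, Finset.card_range]

lemma countB_stdP {n a b : ℕ} (h : a + b ≤ n) : countB n (stdP n a b) = b := by
  have h1 : Finset.univ.filter (fun v : Fin n => stdP n a b v = some false)
      = Finset.univ.filter (fun v : Fin n => a ≤ v.val ∧ v.val < a + b) := by
    apply Finset.filter_congr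
    intro v _
    unfold stdP
    split_ifs <;> simp_all <;> omega
  rw [countB, h1, card_filter_val n (fun x => a ≤ x ∧ x < a + b)]
  have h2 : (Finset.range n).filter (fun x => a ≤ x ∧ x < a + b) = Finset.Ico a (a+b) := by
    ext x; simp; omega
  rw [h2, Nat.card_Ico]
  omega

lemma count_sum_le {n : ℕ} (P : Fin n → Option Bool) : countA n P + countB n P ≤ n := by
  classical
  have hd : Disjoint (Finset.univ.filter fun v : Fin n => P v = some true)
      (Finset.univ.filter fun v : Fin n => P v = some false) := by
    rw [Finset.disjoint_filter]
    intro v _ h1 h2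
    rw [h1] at h2; simp at h2
  calc countA n P + countB n P
      = ((Finset.univ.filter fun v : Fin n => P v = some true)
          ∪ (Finset.univ.filter fun v : Fin n => P v = some false)).card :=
        (Finset.card_union_of_disjoint hd).symm
    _ ≤ (Finset.univ : Finset (Fin n)).card := Finset.card_le_card (Finset.subset_univ _)
    _ = n := by simp

lemma count_none {n : ℕ} (P : Fin n → Option Bool) :
    (Finset.univ.filter fun v : Fin n => P v = none).card + (countA n P + countB n P) = n := by
  classical
  have hd : Disjoint (Finset.univ.filter fun v : Fin n => P v = some true)
      (Finset.univ.filter fun v : Fin n => P v = some false) := by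
    rw [Finset.disjoint_filter]
    intro v _ h1 h2
    rw [h1] at h2; simp at h2
  have h1 : (Finset.univ.filter fun v : Fin n => ¬ (P v = none))
      = (Finset.univ.filter fun v : Fin n => P v = some true)
        ∪ (Finset.univ.filter fun v : Fin n => P v = some false) := by
    ext v
    simp only [Finset.mem_filter, Finset.mem_union, Finset.mem_univ, true_and]
    rcases h : P v with _ | b
    · simp
    · cases b <;> simp
  have h2 := Finset.card_filter_add_card_filter_not
    (s := (Finset.univ : Finset (Fin n))) (p := fun v => P v = none)
  rw [h1, Finset.card_union_of_disjoint hd] at h2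
  simpa [countA, countB] using h2

lemma exists_perm {n : ℕ} (P Q : Fin n → Option Bool) (hA : countA n P = countA n Q)
    (hB : countB n P = countB n Q) : ∃ σ : Equiv.Perm (Fin n), P = Q ∘ σ := by
  classical
  have key : ∀ o : Option Bool, Fintype.card {v // P v = o} = Fintype.card {v // Q v = o} := by
    have hnP := count_none P
    have hnQ := count_none Q
    intro o
    rcases o with _ | b
    · rw [Fintype.card_subtype, Fintype.card_subtype]
      omega
    · cases b
      · rw [Fintype.card_subtype, Fintype.card_subtype]
        exact hB
      · rw [Fintype.card_subtype, Fintype.card_subtype]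
        exact hA
  let e : ∀ o : Option Bool, {v // P v = o} ≃ {v // Q v = o} :=
    fun o => Fintype.equivOfCardEq (key o)
  refine ⟨(Equiv.sigmaFiberEquiv P).symm.trans
    ((Equiv.sigmaCongrRight e).trans (Equiv.sigmaFiberEquiv Q)), ?_⟩
  funext v
  exact ((e (P v)) ⟨v, rfl⟩).prop.symm

lemma anon_count {n : ℕ} {f : (Fin n → Option Bool) → Bool} (hA : Anonymous n f)
    (P Q : Fin n → Option Bool) (h1 : countA n P = countA n Q) (h2 : countB n P = countB n Q) :
    f P = f Q := by
  obtain ⟨σ, hσ⟩ := exists_perm P Q h1 h2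
  rw [hσ]
  exact hA σ Q

lemma card_filter_update {n : ℕ} (P : Fin n → Option Bool) (v : Fin n) (q : Option Bool)
    (p : Option Bool → Prop) [DecidablePred p] :
    (Finset.univ.filter fun w => p (Function.update P v q w)).card
        + (if p (P v) then 1 else 0)
      = (Finset.univ.filter fun w => p (P w)).card + (if p q then 1 else 0) := by
  classical
  have hsplit : ∀ R : Fin n → Option Bool,
      (Finset.univ.filter fun w => p (R w)).card
        = ((Finset.univ.erase v).filter fun w => p (R w)).card + (if p (R v) then 1 else 0) := by
    intro R
    by_cases h : p (R v)
    · rw [if_pos h]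
      have he : Finset.univ.filter (fun w => p (R w))
          = insert v ((Finset.univ.erase v).filter fun w => p (R w)) := by
        ext w
        by_cases hw : w = v <;> simp [hw, h, Finset.mem_erase]
      rw [he, Finset.card_insert_of_notMem (by simp)]
    · rw [if_neg h]
      have he : Finset.univ.filter (fun w => p (R w))
          = (Finset.univ.erase v).filter fun w => p (R w) := by
        ext w
        by_cases hw : w = v <;> simp [hw, h, Finset.mem_erase]
      rw [he, Nat.add_zero]
  have hagree : ((Finset.univ.erase v).filter fun w => p (Function.update P v q w)).card
      = ((Finset.univ.erase v).filter fun w => p (P w)).card := by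
    congr 1
    apply Finset.filter_congr
    intro w hw
    rw [Function.update_of_ne (Finset.mem_erase.mp hw).1]
  rw [hsplit (Function.update P v q), hsplit P, hagree, Function.update_self]
  split_ifs <;> omega

lemma countA_update {n : ℕ} (P : Fin n → Option Bool) (v : Fin n) (q : Option Bool) :
    countA n (Function.update P v q) + (if P v = some true then 1 else 0)
      = countA n P + (if q = some true then 1 else 0) :=
  card_filter_update P v q (fun o => o = some true)

lemma countB_update {n : ℕ} (P : Fin n → Option Bool) (v : Fin n) (q : Option Bool) :
    countB n (Function.update P v q) + (if P v = some false then 1 else 0)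
      = countB n P + (if q = some false then 1 else 0) :=
  card_filter_update P v q (fun o => o = some false)

section Steps

variable {n : ℕ} {f : (Fin n → Option Bool) → Bool}

/-- Along a diagonal, a true at `(a,b)` forces a true at `(a+1,b-1)`. -/
lemma step_diag (hA : Anonymous n f) (hNM : NonManipulable n f) {a b : ℕ} (h : a + b ≤ n) (hb : 0 < b) (ht : f (stdP n a b) = true) :
    f (stdP n (a + 1) (b - 1)) = true := by
  have ha : a < n := by omega
  set v : Fin n := ⟨a, ha⟩ with hv
  set P := stdP n (a + 1) (b - 1) with hP
  have hPv : P v = some true := by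
    simp only [hP, stdP, hv]
    rw [if_pos (by omega)]
  have hsum : (a + 1) + (b - 1) = a + b := by omega
  have hcA : countA n P = a + 1 := countA_stdP (by omega)
  have hcB : countB n P = b - 1 := countB_stdP (by omega)
  have huA := countA_update P v (some false)
  have huB := countB_update P v (some false)
  rw [hPv] at huA huB
  simp at huA huB
  have h1 : f (Function.update P v (some false)) = true := by
    rw [anon_count hA (Function.update P v (some false)) (stdP n a b) ?_ ?_]
    · exact ht
    · rw [countA_stdP h]; omega
    · rw [countB_stdP h]; omega
  exact hNM v P (some false) true hPv h1

/-- A true at `(a,b)` forces a true at `(a+1,b)`. -/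
lemma step_right (hA : Anonymous n f) (hNM : NonManipulable n f) {a b : ℕ} (h : a + 1 + b ≤ n) (ht : f (stdP n a b) = true) :
    f (stdP n (a + 1) b) = true := by
  have ha : a < n := by omega
  set v : Fin n := ⟨a, ha⟩ with hv
  set P := stdP n (a + 1) b with hP
  have hPv : P v = some true := by
    simp only [hP, stdP, hv]
    rw [if_pos (by omega)]
  have hcA : countA n P = a + 1 := countA_stdP (by omega)
  have hcB : countB n P = b := countB_stdP (by omega)
  have huA := countA_update P v none
  have huB := countB_update P v none
  rw [hPv] at huA huB
  simp at huA huB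
  have h1 : f (Function.update P v none) = true := by
    rw [anon_count hA (Function.update P v none) (stdP n a b) ?_ ?_]
    · exact ht
    · rw [countA_stdP (by omega)]; omega
    · rw [countB_stdP (by omega)]; omega
  exact hNM v P none true hPv h1

/-- A false at `(a,b)` forces a false at `(a,b+1)`. -/
lemma step_down (hA : Anonymous n f) (hNM : NonManipulable n f) {a b : ℕ} (h : a + b + 1 ≤ n) (ht : f (stdP n a b) = false) :
    f (stdP n a (b + 1)) = false := by
  have ha : a + b < n := by omega
  set v : Fin n := ⟨a + b, ha⟩ with hv
  set P := stdP n a (b + 1) with hP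
  have hPv : P v = some false := by
    simp only [hP, stdP, hv]
    rw [if_neg (by omega), if_pos (by omega)]
  have hcA : countA n P = a := countA_stdP (by omega)
  have hcB : countB n P = b + 1 := countB_stdP (by omega)
  have huA := countA_update P v none
  have huB := countB_update P v none
  rw [hPv] at huA huB
  simp at huA huB
  have h1 : f (Function.update P v none) = false := by
    rw [anon_count hA (Function.update P v none) (stdP n a b) ?_ ?_]
    · exact ht
    · rw [countA_stdP (by omega)]; omega
    · rw [countB_stdP (by omega)]; omega
  exact hNM v P none false hPv h1

end Steps

/-- The threshold of `f` on the diagonal `countA + countB = m`. -/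
def Tf (n : ℕ) (f : (Fin n → Option Bool) → Bool) (m : ℕ) : ℕ :=
  ((Finset.range (m + 1)).filter fun a => f (stdP n a (m - a)) = false).card

lemma Tf_le {n : ℕ} (f : (Fin n → Option Bool) → Bool) (m : ℕ) : Tf n f m ≤ m + 1 := by
  have := Finset.card_filter_le (Finset.range (m + 1))
    (fun a => f (stdP n a (m - a)) = false)
  simpa [Tf] using this

section Thresh

variable {n : ℕ} {f : (Fin n → Option Bool) → Bool}

lemma true_mono (hA : Anonymous n f) (hNM : NonManipulable n f) {m a a' : ℕ} (hm : m ≤ n)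
    (h : a ≤ a') (ha' : a' ≤ m) (ht : f (stdP n a (m - a)) = true) :
    f (stdP n a' (m - a')) = true := by
  induction a' , h using Nat.le_induction with
  | base => exact ht
  | succ k hk ih =>
    have hkm : k ≤ m := by omega
    have h1 := step_diag hA hNM (a := k) (b := m - k) (by omega) (by omega) (ih (by omega))
    have h2 : m - k - 1 = m - (k + 1) := by omega
    rwa [h2] at h1

lemma mem_iff (hA : Anonymous n f) (hNM : NonManipulable n f) {m a : ℕ} (hm : m ≤ n)
    (ha : a ≤ m) : f (stdP n a (m - a)) = false ↔ a < Tf n f m := by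
  constructor
  · intro hf
    have hsub : Finset.range (a + 1)
        ⊆ (Finset.range (m + 1)).filter fun x => f (stdP n x (m - x)) = false := by
      intro b hb
      rw [Finset.mem_range] at hb
      rw [Finset.mem_filter, Finset.mem_range]
      refine ⟨by omega, ?_⟩
      by_contra hbt
      rw [Bool.not_eq_false] at hbt
      have := true_mono hA hNM hm (by omega : b ≤ a) ha hbt
      rw [hf] at this; exact Bool.false_ne_true this
    have := Finset.card_le_card hsub
    rw [Finset.card_range] at this
    have hTf : Tf n f m
        = ((Finset.range (m + 1)).filter fun x => f (stdP n x (m - x)) = false).card := rfl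
    omega
  · intro hlt
    by_contra hft
    rw [Bool.not_eq_false] at hft
    have hsub : ((Finset.range (m + 1)).filter fun x => f (stdP n x (m - x)) = false)
        ⊆ Finset.range a := by
      intro b hb
      rw [Finset.mem_filter, Finset.mem_range] at hb
      rw [Finset.mem_range]
      by_contra hba
      have := true_mono hA hNM hm (by omega : a ≤ b) (by omega) hft
      rw [hb.2] at this; exact Bool.false_ne_true this
    have := Finset.card_le_card hsub
    rw [Finset.card_range] at this
    have hTf : Tf n f m
        = ((Finset.range (m + 1)).filter fun x => f (stdP n x (m - x)) = false).card := rfl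
    omega

lemma Tf_step (hA : Anonymous n f) (hNM : NonManipulable n f) {m : ℕ} (hm : m + 1 ≤ n) :
    Tf n f m ≤ Tf n f (m + 1) ∧ Tf n f (m + 1) ≤ Tf n f m + 1 := by
  constructor
  · rcases Nat.eq_zero_or_pos (Tf n f m) with h0 | h0
    · omega
    · set a := Tf n f m - 1 with hadef
      have haM : a ≤ m := by have := Tf_le f m; omega
      have hfa : f (stdP n a (m - a)) = false :=
        (mem_iff hA hNM (by omega) haM).mpr (by omega)
      have h1 : f (stdP n a (m - a + 1)) = false := step_down hA hNM (by omega) hfa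
      have h2 : m + 1 - a = m - a + 1 := by omega
      have h3 : a < Tf n f (m + 1) := by
        rw [← mem_iff hA hNM hm (by omega)]
        rwa [h2]
      omega
  · rcases Nat.eq_zero_or_pos (Tf n f (m + 1)) with h0 | h0
    · omega
    · set a := Tf n f (m + 1) - 1 with hadef
      have haM : a ≤ m + 1 := by have := Tf_le f (m + 1); omega
      have hfa : f (stdP n a (m + 1 - a)) = false :=
        (mem_iff hA hNM hm haM).mpr (by omega)
      rcases Nat.eq_zero_or_pos a with ha0 | ha0
      · omega
      · have hb : m - (a - 1) = m + 1 - a := by omega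
        have hfa' : f (stdP n (a - 1) (m - (a - 1))) = false := by
          by_contra ht
          rw [Bool.not_eq_false] at ht
          have := step_right hA hNM (a := a - 1) (b := m - (a - 1)) (by omega) ht
          rw [show a - 1 + 1 = a by omega, hb, hfa] at this
          exact Bool.false_ne_true this
        have := (mem_iff hA hNM (by omega) (by omega : a - 1 ≤ m)).mp hfa'
        omega

end Thresh

/-- Partial sums of a bit sequence. -/
def tc (c : ℕ → Bool) (m : ℕ) : ℕ :=
  ((Finset.range (m + 1)).filter fun i => c i = true).card

lemma tc_zero (c : ℕ → Bool) : tc c 0 = if c 0 = true then 1 else 0 := by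
  rw [tc, Finset.range_one, Finset.filter_singleton]
  split_ifs <;> simp

lemma tc_succ (c : ℕ → Bool) (m : ℕ) :
    tc c (m + 1) = tc c m + if c (m + 1) = true then 1 else 0 := by
  unfold tc
  rw [Finset.range_add_one, Finset.filter_insert]
  split_ifs with h
  · rw [Finset.card_insert_of_notMem (by simp)]
  · omega

lemma tc_congr {c c' : ℕ → Bool} {m : ℕ} (h : ∀ i ≤ m, c i = c' i) : tc c m = tc c' m := by
  unfold tc
  congr 1
  apply Finset.filter_congr
  intro i hi
  rw [Finset.mem_range] at hi
  rw [h i (by omega)]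

lemma tc_le (c : ℕ → Bool) (m : ℕ) : tc c m ≤ m + 1 := by
  have := Finset.card_filter_le (Finset.range (m + 1)) (fun i => c i = true)
  simpa [tc] using this

/-- The social choice function attached to a bit sequence. -/
def fC (n : ℕ) (c : ℕ → Bool) : (Fin n → Option Bool) → Bool :=
  fun P => decide (tc c (countA n P + countB n P) ≤ countA n P)

lemma countA_comp {n : ℕ} (P : Fin n → Option Bool) (σ : Equiv.Perm (Fin n)) :
    countA n (P ∘ σ) = countA n P := by
  unfold countA
  rw [← Fintype.card_subtype, ← Fintype.card_subtype]
  exact Fintype.card_congr (σ.subtypeEquiv fun v => Iff.rfl)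

lemma countB_comp {n : ℕ} (P : Fin n → Option Bool) (σ : Equiv.Perm (Fin n)) :
    countB n (P ∘ σ) = countB n P := by
  unfold countB
  rw [← Fintype.card_subtype, ← Fintype.card_subtype]
  exact Fintype.card_congr (σ.subtypeEquiv fun v => Iff.rfl)

lemma fC_anon (n : ℕ) (c : ℕ → Bool) : Anonymous n (fC n c) := by
  intro σ P
  unfold fC
  rw [countA_comp, countB_comp]

lemma fC_nm (n : ℕ) (c : ℕ → Bool) : NonManipulable n (fC n c) := by
  intro v P q x hPv hupd
  by_cases hq : q = P v
  · rwa [hq, Function.update_eq_self] at hupd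
  have huA := countA_update P v q
  have huB := countB_update P v q
  rw [hPv] at huA huB
  cases x with
  | true =>
    rw [fC, decide_eq_true_iff] at hupd ⊢
    rcases q with _ | b
    · simp at huA huB
      have hsum : countA n P + countB n P
          = (countA n (Function.update P v none) + countB n (Function.update P v none)) + 1 := by
        omega
      have h2 := tc_succ c (countA n (Function.update P v none)
        + countB n (Function.update P v none))
      rw [hsum, h2]
      split_ifs <;> omega
    · cases b
      · simp at huA huB
        have hsum : countA n P + countB n P
            = countA n (Function.update P v (some false))
              + countB n (Function.update P v (some false)) := by omega
        rw [hsum]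
        omega
      · simp at huA huB
        have hsum : countA n P + countB n P
            = countA n (Function.update P v (some true))
              + countB n (Function.update P v (some true)) := by omega
        rw [hsum]
        omega
  | false =>
    rw [fC, decide_eq_false_iff_not, not_le] at hupd ⊢
    rcases q with _ | b
    · simp at huA huB
      have hsum : countA n P + countB n P
          = (countA n (Function.update P v none) + countB n (Function.update P v none)) + 1 := by
        omega
      have h2 := tc_succ c (countA n (Function.update P v none)
        + countB n (Function.update P v none))
      rw [hsum, h2]
      split_ifs <;> omega
    · cases b
      · simp at huA huB
        have hsum : countA n P + countB n P
            = countA n (Function.update P v (some false))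
              + countB n (Function.update P v (some false)) := by omega
        rw [hsum]
        omega
      · simp at huA huB
        have hsum : countA n P + countB n P
            = countA n (Function.update P v (some true))
              + countB n (Function.update P v (some true)) := by omega
        rw [hsum]
        omega

def ext (n : ℕ) (d : Fin (n + 1) → Bool) : ℕ → Bool :=
  fun m => if h : m < n + 1 then d ⟨m, h⟩ else false

lemma fC_eval_std (n : ℕ) (c : ℕ → Bool) {m a : ℕ} (hm : m ≤ n) (ha : a ≤ m) :
    fC n c (stdP n a (m - a)) = decide (tc c m ≤ a) := by
  rw [fC, countA_stdP (by omega), countB_stdP (by omega),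
    show a + (m - a) = m by omega]

lemma tc_inj {n : ℕ} {c c' : ℕ → Bool} (h : fC n c = fC n c') :
    ∀ m ≤ n, tc c m = tc c' m := by
  intro m hm
  have key : ∀ a ≤ m, (tc c m ≤ a ↔ tc c' m ≤ a) := by
    intro a ha
    have h1 := congrFun h (stdP n a (m - a))
    rw [fC_eval_std n c hm ha, fC_eval_std n c' hm ha, decide_eq_decide] at h1
    exact h1
  rcases lt_trichotomy (tc c m) (tc c' m) with hlt | he | hlt
  · have hb := tc_le c' m
    have h1 := (key (tc c m) (by omega)).mp le_rfl
    omega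
  · exact he
  · have hb := tc_le c m
    have h1 := (key (tc c' m) (by omega)).mpr le_rfl
    omega

lemma bit_eq {n : ℕ} {c c' : ℕ → Bool} (h : ∀ m ≤ n, tc c m = tc c' m) :
    ∀ m ≤ n, c m = c' m := by
  intro m hm
  cases m with
  | zero =>
    have h1 := tc_zero c
    have h2 := tc_zero c'
    have h3 := h 0 (by omega)
    cases hc : c 0 <;> cases hc' : c' 0 <;>
      rw [hc] at h1 <;> rw [hc'] at h2 <;> simp at h1 h2 <;> omega
  | succ k =>
    have h1 := tc_succ c k
    have h2 := tc_succ c' k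
    have e1 := h k (by omega)
    have e2 := h (k + 1) hm
    cases hc : c (k + 1) <;> cases hc' : c' (k + 1) <;>
      rw [hc] at h1 <;> rw [hc'] at h2 <;> simp at h1 h2 <;> omega

/-- Recover the bit sequence from a social choice function. -/
def cOf (n : ℕ) (f : (Fin n → Option Bool) → Bool) : ℕ → Bool :=
  fun m => if m = 0 then decide (Tf n f 0 = 1) else decide (Tf n f m = Tf n f (m - 1) + 1)

lemma tc_cOf {n : ℕ} {f : (Fin n → Option Bool) → Bool}
    (hA : Anonymous n f) (hNM : NonManipulable n f) :
    ∀ m ≤ n, tc (cOf n f) m = Tf n f m := by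
  intro m
  induction m with
  | zero =>
    intro _
    have h1 := Tf_le f 0
    rw [tc_zero]
    by_cases h : Tf n f 0 = 1
    · simp [cOf, h]
    · simp [cOf, h]
      omega
  | succ k ih =>
    intro hk
    rw [tc_succ, ih (by omega)]
    have hs := Tf_step hA hNM hk
    have hc : cOf n f (k + 1) = decide (Tf n f (k + 1) = Tf n f k + 1) := by
      simp [cOf]
    rw [hc]
    by_cases h : Tf n f (k + 1) = Tf n f k + 1 <;> simp [h] <;> omega

end Stmt13


/-- there are exactly `2 ^ (n + 1)` anonymous, non-manipulable binary
social choice functions on `n` voters who may declare indifference. -/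
theorem stmt_13 (n : ℕ) :
    {f : (Fin n → Option Bool) → Bool |
      Anonymous n f ∧ NonManipulable n f}.ncard = 2 ^ (n + 1) := by
  classical
  open Stmt13 in
  have hbij : Function.Bijective (fun d : Fin (n + 1) → Bool =>
      (⟨fC n (ext n d), fC_anon n _, fC_nm n _⟩ :
        {f : (Fin n → Option Bool) → Bool // Anonymous n f ∧ NonManipulable n f})) := by
    constructor
    · intro d d' hdd
      have h : fC n (ext n d) = fC n (ext n d') := congrArg Subtype.val hdd
      have hb := bit_eq (tc_inj h)
      funext i
      have h2 := hb i.val (by omega)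
      simpa [ext, i.isLt] using h2
    · rintro ⟨f, hA, hNM⟩
      refine ⟨fun i => cOf n f i.val, ?_⟩
      apply Subtype.ext
      show fC n (ext n fun i => cOf n f i.val) = f
      funext P
      have hsum := count_sum_le P
      have h1 : tc (ext n fun i => cOf n f i.val) (countA n P + countB n P)
          = tc (cOf n f) (countA n P + countB n P) := by
        apply tc_congr
        intro i hi
        rw [ext, dif_pos (by omega)]
      have h2 : tc (cOf n f) (countA n P + countB n P) = Tf n f (countA n P + countB n P) :=
        tc_cOf hA hNM _ hsum
      have h3 : f P = f (stdP n (countA n P) ((countA n P + countB n P) - countA n P)) := by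
        apply anon_count hA
        · rw [countA_stdP (by omega)]
        · rw [countB_stdP (by omega)]
          omega
      have h4 := mem_iff hA hNM hsum (show countA n P ≤ countA n P + countB n P by omega)
      show decide (tc (ext n fun i => cOf n f i.val) (countA n P + countB n P) ≤ countA n P)
        = f P
      rw [h1, h2, h3]
      cases hx : f (stdP n (countA n P) ((countA n P + countB n P) - countA n P))
      · rw [decide_eq_false_iff_not, not_le]
        exact h4.mp hx
      · rw [decide_eq_true_iff]
        have h5 : ¬ (countA n P < Tf n f (countA n P + countB n P)) := by
          intro hcon
          rw [h4.mpr hcon] at hx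
          exact Bool.false_ne_true hx
        omega
  have e : (Fin (n + 1) → Bool)
      ≃ {f : (Fin n → Option Bool) → Bool // Anonymous n f ∧ NonManipulable n f} :=
    Equiv.ofBijective _ hbij
  have h5 : Nat.card {f : (Fin n → Option Bool) → Bool //
      Anonymous n f ∧ NonManipulable n f} = 2 ^ (n + 1) := by
    rw [← Nat.card_congr e, Nat.card_eq_fintype_card]
    simp
  rw [← Nat.card_coe_set_eq]
  exact h5
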